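/- Let v be a real analytic function on 𝕋^b satisfying the non-degeneracy condition, with Łojasiewicz constants C(v), a(v) > 0 (so that sup_{j, x_j^¬} mes({x : |v(x)-E| < δ}(x_j^¬)) ≤ C(v) δ^{a(v)} for all E ∈ ℝ, δ > 0). For E ∈ ℝ, δ > 0 let X = {x ∈ 𝕋^b : |v(x) - E| < δ} and X_N = ⋃_{|n|≤N} {x ∈ 𝕋^b : x + nω mod ℤ^b ∈ X}. Then: (1) sup_{1≤j≤d, x_j^¬ ∈ 𝕋^{b-b_j}} mes(X_N(x_j^¬)) ≤ C(v)(2N+1)^d δ^{a(v)}. (2) Moreover, if λ ≥ 2δ^{-1}(2N+1)^d and N ≥ N(ρ,d), then for any x ∉ X_N, any ω ∈ 𝕋^b and any Q_N ∈ 𝓔_N^0, the Green's function G_{Q_N}(E;x) exists and satisfies ‖G_{Q_N}(E;x)‖ ≤ 2δ^{-1} and |G_{Q_N}(E;x)(n,n')| ≤ 2δ^{-1} e^{-ρ|n-n'|} for all n,n' ∈ Q_N. -/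

import Mathlib

open MeasureTheory Real Set ENNReal

namespace QPLoc

inductive SignCond : Type
  | ge | le | eq

def SignCond.holds : SignCond → ℝ → Prop
  | .ge, t => 0 ≤ t
  | .le, t => t ≤ 0
  | .eq, t => t = 0

/-- `S` is a semi-algebraic subset of `ℝ^ι` of degree at most `D`. -/
def SemiAlgebraic {ι : Type} [Fintype ι] (S : Set (ι → ℝ)) (D : ℝ) : Prop :=
  ∃ (s k : ℕ) (P : Fin s → MvPolynomial ι ℝ) (J : ℕ)
    (L : Fin J → Finset (Fin s)) (sg : Fin J → Fin s → SignCond),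
    ((s : ℝ) * (k : ℝ) ≤ D) ∧ (∀ i, (P i).totalDegree ≤ k) ∧
    S = ⋃ j : Fin J, ⋂ l ∈ L j, {x : ι → ℝ | (sg j l).holds (MvPolynomial.eval x (P l))}

def cube (ι : Type) : Set (ι → ℝ) := {x | ∀ i, x i ∈ Set.Icc (0 : ℝ) 1}

def zNorm {d : ℕ} (n : Fin d → ℤ) : ℕ := Finset.univ.sup fun i => (n i).natAbs

def shift {b d : ℕ} (β : Fin b → Fin d) (ω : Fin b → ℝ) (k : Fin d → ℤ) (x : Fin b → ℝ) :
    Fin b → ℝ := fun t => x t + (k (β t) : ℝ) * ω t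

noncomputable def torusProj {b : ℕ} (x : Fin b → ℝ) : Fin b → ℝ := fun t => Int.fract (x t)

def btilde {b d : ℕ} (β : Fin b → Fin d) : ℕ :=
  Finset.univ.sup fun j : Fin d => (Finset.univ.filter fun t => β t = j).card

noncomputable def opNorm {𝕜 : Type} [RCLike 𝕜] {ι : Type} [Fintype ι] [DecidableEq ι]
    (A : Matrix ι ι 𝕜) : ℝ :=
  ‖LinearMap.toContinuousLinearMap (Matrix.toEuclideanLin A)‖

noncomputable def hamR {b d : ℕ} (β : Fin b → Fin d)
    (S : (Fin d → ℤ) → (Fin d → ℤ) → ℝ) (lam : ℝ) (v : (Fin b → ℝ) → ℝ)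
    (ω x : Fin b → ℝ) (E : ℝ) (Λ : Finset (Fin d → ℤ)) : Matrix Λ Λ ℝ :=
  Matrix.of fun n n' => lam⁻¹ * S n.1 n'.1 + (if n = n' then v (shift β ω n.1 x) - E else 0)

noncomputable def green {b d : ℕ} (β : Fin b → Fin d)
    (S : (Fin d → ℤ) → (Fin d → ℤ) → ℝ) (lam : ℝ) (v : (Fin b → ℝ) → ℝ)
    (ω x : Fin b → ℝ) (E : ℝ) (Λ : Finset (Fin d → ℤ)) : Matrix Λ Λ ℝ :=
  (hamR β S lam v ω x E Λ)⁻¹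

def box (d N : ℕ) : Set (Fin d → ℤ) := {n | ∀ i, |n i| ≤ (N : ℤ)}

def corner {d : ℕ} (ς : Fin d → Option Bool) : Set (Fin d → ℤ) :=
  {n | ∀ i, match ς i with
    | none => True
    | some true => 0 < n i
    | some false => n i < 0}

/-- elementary region of size `N` centered at `0`. -/
def IsER0 (d N : ℕ) (Q : Set (Fin d → ℤ)) : Prop :=
  Q = box d N ∨ ∃ ς : Fin d → Option Bool,
    2 ≤ (Finset.univ.filter fun i => (ς i).isSome).card ∧ Q = box d N \ corner ς

/-- translate of an elementary region of size `N`. -/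
def IsER (d N : ℕ) (Q : Set (Fin d → ℤ)) : Prop :=
  ∃ (c : Fin d → ℤ) (Q₀ : Set (Fin d → ℤ)), IsER0 d N Q₀ ∧ Q = (fun n => c + n) '' Q₀

/-- `(E, x)` is `(ρ', N)`-good. -/
def Good {b d : ℕ} (β : Fin b → Fin d) (S : (Fin d → ℤ) → (Fin d → ℤ) → ℝ)
    (lam : ℝ) (v : (Fin b → ℝ) → ℝ) (ω : Fin b → ℝ) (ρ' : ℝ) (N : ℕ) (E : ℝ)
    (x : Fin b → ℝ) : Prop :=
  ∀ Λ : Finset (Fin d → ℤ), IsER0 d N (↑Λ : Set (Fin d → ℤ)) →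
    IsUnit (hamR β S lam v ω x E Λ) ∧
    opNorm (green β S lam v ω x E Λ) ≤ Real.exp (Real.sqrt (N : ℝ)) ∧
    ∀ n n' : Λ, (N : ℝ) / 10 ≤ (zNorm (n.1 - n'.1) : ℝ) →
      |green β S lam v ω x E Λ n n'| ≤ Real.exp (-ρ' * (zNorm (n.1 - n'.1) : ℝ))

/-- Lebesgue measure of the section of `X ⊆ 𝕋^b` in the `j`-th block of variables,
the remaining variables being fixed at `x`. -/
def blockIdx {b d : ℕ} (β : Fin b → Fin d) (j : Fin d) : Type := {t : Fin b // β t = j}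

instance {b d : ℕ} (β : Fin b → Fin d) (j : Fin d) : Fintype (blockIdx β j) :=
  Subtype.fintype _

noncomputable def sectMeasure {b d : ℕ} (β : Fin b → Fin d) (X : Set (Fin b → ℝ))
    (j : Fin d) (x : Fin b → ℝ) : ℝ≥0∞ :=
  volume {θ : blockIdx β j → ℝ |
    (∀ s, θ s ∈ Set.Icc (0 : ℝ) 1) ∧ (fun t => if h : β t = j then θ ⟨t, h⟩ else x t) ∈ X}

/-- the Green's functions satisfy property P with parameters `(γ, ρ')` at size `N`,
with semialgebraic frequency set `Ω` and exceptional sets `X ω E`. -/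
def PropertyPWith {b d : ℕ} (β : Fin b → Fin d) (S : (Fin d → ℤ) → (Fin d → ℤ) → ℝ)
    (lam : ℝ) (v : (Fin b → ℝ) → ℝ) (γ ρ' : ℝ) (N : ℕ)
    (Ω : Set (Fin b → ℝ)) (X : (Fin b → ℝ) → ℝ → Set (Fin b → ℝ)) : Prop :=
  Ω ⊆ cube (Fin b) ∧ SemiAlgebraic Ω ((N : ℝ) ^ (4 * d)) ∧
  ∀ ω ∈ Ω, ∀ E : ℝ,
    (∀ (j : Fin d) (x : Fin b → ℝ),
      sectMeasure β (X ω E) j x ≤ ENNReal.ofReal (Real.exp (-((N : ℝ) ^ γ)))) ∧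
    ∀ x : Fin b → ℝ, x ∉ X ω E → Good β S lam v ω ρ' N E x

/-- Anderson localization for the operator on `ℓ²(ℤ^d)` with matrix `Hmat`:
pure point spectrum (a complete system of eigenfunctions) with exponentially
decaying eigenfunctions. -/
def ALocalized {d : ℕ} (Hmat : (Fin d → ℤ) → (Fin d → ℤ) → ℝ) : Prop :=
  ∃ (ψ : ℕ → (Fin d → ℤ) → ℝ) (Ev : ℕ → ℝ),
    (∀ k, ψ k ≠ 0) ∧
    (∀ k, Summable fun n => (ψ k n) ^ 2) ∧
    (∀ k, ∃ C > (0:ℝ), ∃ c > (0:ℝ), ∀ n, |ψ k n| ≤ C * Real.exp (-c * (zNorm n : ℝ))) ∧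
    (∀ k n, ∑' n', Hmat n n' * ψ k n' = Ev k * ψ k n) ∧
    (∀ f : (Fin d → ℤ) → ℝ, (Summable fun n => (f n) ^ 2) →
      (∀ k, ∑' n, f n * ψ k n = 0) → f = 0)



/- ---------------- auxiliary lemmas ---------------- -/

section Aux

set_option linter.unusedSectionVars false

lemma fract_mp (c : ℝ) :
    MeasurePreserving (fun θ : ℝ => Int.fract (θ + c))
      (volume.restrict (Ico 0 1)) (volume.restrict (Ico 0 1)) := by
  set r := Int.fract c with hrdef
  have hr0 : 0 ≤ r := Int.fract_nonneg c
  have hr1 : r < 1 := Int.fract_lt_one c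
  have hmeas : Measurable fun θ : ℝ => Int.fract (θ + c) :=
    measurable_fract.comp (measurable_add_const c)
  refine ⟨hmeas, ?_⟩
  refine Measure.ext fun A hA => ?_
  rw [Measure.map_apply hmeas hA, Measure.restrict_apply' measurableSet_Ico,
    Measure.restrict_apply' measurableSet_Ico]
  have hfr : ∀ θ : ℝ, Int.fract (θ + c) = Int.fract (θ + r) := by
    intro θ
    have : θ + c = θ + r + ⌊c⌋ := by rw [hrdef, Int.fract]; ring
    rw [this, Int.fract_add_intCast]
  have key : (fun θ : ℝ => Int.fract (θ + c)) ⁻¹' A ∩ Ico 0 1 =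
      ((fun θ : ℝ => θ + r) ⁻¹' (A ∩ Ico r 1)) ∪
      ((fun θ : ℝ => θ + (r - 1)) ⁻¹' (A ∩ Ico 0 r)) := by
    ext θ
    simp only [mem_inter_iff, mem_preimage, mem_Ico, mem_union]
    constructor
    · rintro ⟨hAθ, hθ0, hθ1⟩
      rw [hfr] at hAθ
      rcases lt_or_ge (θ + r) 1 with h | h
      · left
        have : Int.fract (θ + r) = θ + r := Int.fract_eq_self.2 ⟨by linarith, h⟩
        exact ⟨by rwa [this] at hAθ, by linarith, h⟩
      · right
        have h2 : θ + r - 1 ∈ Ico (0:ℝ) 1 := ⟨by linarith, by linarith⟩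
        have : Int.fract (θ + r) = θ + r - 1 := by
          have := Int.fract_eq_self.2 ⟨h2.1, h2.2⟩
          calc Int.fract (θ + r) = Int.fract (θ + r - 1 + (1:ℤ)) := by norm_num
            _ = Int.fract (θ + r - 1) := Int.fract_add_intCast _ _
            _ = θ + r - 1 := this
        refine ⟨?_, by linarith, by linarith⟩
        · have e : θ + (r - 1) = θ + r - 1 := by ring
          rw [e]; rwa [this] at hAθ
    · rintro (⟨hAθ, hθr, hθ1⟩ | ⟨hAθ, hθ0, hθr⟩)
      · have hθ0 : 0 ≤ θ := by linarith
        have hθ1' : θ < 1 := by linarith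
        refine ⟨?_, hθ0, hθ1'⟩
        rw [hfr, Int.fract_eq_self.2 ⟨by linarith, hθ1⟩]; exact hAθ
      · have hθ0' : 0 ≤ θ := by linarith
        have hθ1' : θ < 1 := by linarith
        refine ⟨?_, hθ0', hθ1'⟩
        have e : θ + r = θ + (r - 1) + (1:ℤ) := by push_cast; ring
        rw [hfr, e, Int.fract_add_intCast, Int.fract_eq_self.2 ⟨hθ0, by linarith⟩]
        exact hAθ
  rw [key]
  have hd : Disjoint ((fun θ : ℝ => θ + r) ⁻¹' (A ∩ Ico r 1))
      ((fun θ : ℝ => θ + (r - 1)) ⁻¹' (A ∩ Ico 0 r)) := by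
    apply Set.disjoint_left.2
    rintro θ ⟨_, hθr, _⟩ ⟨_, _, hθr'⟩
    simp only [mem_Ico] at *
    linarith
  rw [measure_union hd (((hA.inter measurableSet_Ico)).preimage (measurable_add_const _)),
    measure_preimage_add_right, measure_preimage_add_right,
    ← measure_union (Set.disjoint_left.2 ?_) (hA.inter measurableSet_Ico)]
  · congr 1
    rw [Set.union_comm, ← Set.inter_union_distrib_left, Ico_union_Ico_eq_Ico hr0 hr1.le]
  · rintro θ ⟨_, hθ1, _⟩ ⟨_, _, hθ2⟩
    linarith

lemma pi_restrict_eq {ι : Type} [Fintype ι] :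
    (volume : Measure (ι → ℝ)).restrict (univ.pi fun _ => Ico (0:ℝ) 1) =
      Measure.pi (fun _ : ι => volume.restrict (Ico (0:ℝ) 1)) := by
  refine (Measure.pi_eq (μ := fun _ : ι => volume.restrict (Ico (0:ℝ) 1)) fun s hs => ?_).symm
  rw [Measure.restrict_apply' (MeasurableSet.univ_pi fun _ => measurableSet_Ico),
    ← Set.pi_inter_distrib, volume_pi_pi]
  simp_rw [Measure.restrict_apply (hs _)]

lemma vol_fract_le {ι : Type} [Fintype ι] (c : ι → ℝ) (A : Set (ι → ℝ))
    (hA : MeasurableSet A) :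
    volume {θ : ι → ℝ | (∀ s, θ s ∈ Icc (0:ℝ) 1) ∧ (fun s => Int.fract (θ s + c s)) ∈ A} ≤
      volume {θ : ι → ℝ | (∀ s, θ s ∈ Icc (0:ℝ) 1) ∧ θ ∈ A} := by
  classical
  set T : (ι → ℝ) → (ι → ℝ) := fun θ s => Int.fract (θ s + c s) with hT
  set IcoS : Set (ι → ℝ) := univ.pi fun _ => Ico (0:ℝ) 1 with hIcoS
  have hIcoMeas : MeasurableSet IcoS := MeasurableSet.univ_pi fun _ => measurableSet_Ico
  have hnull : volume ({θ : ι → ℝ | ∀ s, θ s ∈ Icc (0:ℝ) 1} \ IcoS) = 0 := by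
    have hsub : {θ : ι → ℝ | ∀ s, θ s ∈ Icc (0:ℝ) 1} \ IcoS ⊆
        ⋃ s : ι, {θ : ι → ℝ | θ s = 1} := by
      rintro θ ⟨h1, h2⟩
      simp only [hIcoS, Set.mem_pi, Set.mem_univ, forall_true_left, not_forall] at h2
      obtain ⟨s, hs⟩ := h2
      have := h1 s
      simp only [mem_Icc] at this
      simp only [mem_Ico, not_and, not_lt] at hs
      exact Set.mem_iUnion.2 ⟨s, le_antisymm this.2 (hs this.1)⟩
    refine measure_mono_null hsub (measure_iUnion_null fun s => ?_)
    have he : {θ : ι → ℝ | θ s = 1} = univ.pi fun i => if i = s then {(1:ℝ)} else univ := by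
      ext θ
      simp only [Set.mem_setOf_eq, Set.mem_pi, Set.mem_univ, forall_true_left]
      constructor
      · intro h i; split <;> simp_all
      · intro h; have := h s; simp at this; exact this
    rw [he, volume_pi_pi]
    exact Finset.prod_eq_zero (Finset.mem_univ s) (by simp)
  have hMP : MeasurePreserving T
      (Measure.pi (fun _ : ι => volume.restrict (Ico (0:ℝ) 1)))
      (Measure.pi (fun _ : ι => volume.restrict (Ico (0:ℝ) 1))) :=
    measurePreserving_pi _ _ (fun s => fract_mp (c s))
  calc volume {θ : ι → ℝ | (∀ s, θ s ∈ Icc (0:ℝ) 1) ∧ T θ ∈ A}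
      ≤ volume ((T ⁻¹' A ∩ IcoS) ∪ ({θ : ι → ℝ | ∀ s, θ s ∈ Icc (0:ℝ) 1} \ IcoS)) := by
        apply measure_mono
        rintro θ ⟨h1, h2⟩
        by_cases h : θ ∈ IcoS
        · exact Or.inl ⟨h2, h⟩
        · exact Or.inr ⟨h1, h⟩
    _ ≤ volume (T ⁻¹' A ∩ IcoS) + volume ({θ : ι → ℝ | ∀ s, θ s ∈ Icc (0:ℝ) 1} \ IcoS) :=
        measure_union_le _ _
    _ = volume (T ⁻¹' A ∩ IcoS) := by rw [hnull, add_zero]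
    _ = (volume.restrict IcoS) (T ⁻¹' A) := (Measure.restrict_apply' hIcoMeas).symm
    _ = (Measure.pi (fun _ : ι => volume.restrict (Ico (0:ℝ) 1))) (T ⁻¹' A) := by
        rw [pi_restrict_eq]
    _ = (Measure.pi (fun _ : ι => volume.restrict (Ico (0:ℝ) 1))) A :=
        hMP.measure_preimage hA.nullMeasurableSet
    _ = (volume.restrict IcoS) A := by rw [pi_restrict_eq]
    _ = volume (A ∩ IcoS) := Measure.restrict_apply' hIcoMeas
    _ ≤ volume {θ : ι → ℝ | (∀ s, θ s ∈ Icc (0:ℝ) 1) ∧ θ ∈ A} := by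
        apply measure_mono
        rintro θ ⟨h1, h2⟩
        refine ⟨fun s => ?_, h1⟩
        have := h2 s (Set.mem_univ s)
        exact ⟨this.1, this.2.le⟩

lemma zNorm_le_iff {d N : ℕ} {n : Fin d → ℤ} :
    zNorm n ≤ N ↔ ∀ i, |n i| ≤ (N : ℤ) := by
  unfold zNorm
  rw [Finset.sup_le_iff]
  constructor
  · intro h i
    have := h i (Finset.mem_univ i)
    rw [Int.abs_eq_natAbs]
    exact_mod_cast this
  · intro h i _
    have := h i
    rw [Int.abs_eq_natAbs] at this
    exact_mod_cast this

lemma zNorm_tri {d : ℕ} (a c : Fin d → ℤ) : zNorm (a + c) ≤ zNorm a + zNorm c := by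
  unfold zNorm
  apply Finset.sup_le
  intro i _
  calc (a i + c i).natAbs ≤ (a i).natAbs + (c i).natAbs := Int.natAbs_add_le _ _
    _ ≤ (Finset.univ.sup fun i => (a i).natAbs) + Finset.univ.sup fun i => (c i).natAbs :=
        Nat.add_le_add (Finset.le_sup (f := fun i => (a i).natAbs) (Finset.mem_univ i))
          (Finset.le_sup (f := fun i => (c i).natAbs) (Finset.mem_univ i))

lemma zNorm_zero {d : ℕ} : zNorm (0 : Fin d → ℤ) = 0 := by
  unfold zNorm
  simp

lemma er0_subset_box {d N : ℕ} {Q : Set (Fin d → ℤ)} (h : IsER0 d N Q) : Q ⊆ box d N := by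
  rcases h with h | ⟨ς, _, h⟩
  · exact h.le
  · rw [h]; exact diff_subset

lemma er0_zero_mem {d N : ℕ} {Q : Set (Fin d → ℤ)} (h : IsER0 d N Q) :
    (0 : Fin d → ℤ) ∈ Q := by
  have h0 : (0 : Fin d → ℤ) ∈ box d N := fun i => by simp
  rcases h with h | ⟨ς, hcard, h⟩
  · rw [h]; exact h0
  · rw [h]
    refine ⟨h0, fun hc => ?_⟩
    have : (Finset.univ.filter fun i => (ς i).isSome).Nonempty := by
      rw [← Finset.card_pos]; omega
    obtain ⟨i, hi⟩ := this
    rw [Finset.mem_filter] at hi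
    have := hc i
    rcases hς : ς i with _ | b
    · rw [hς] at hi; simp at hi
    · rw [hς] at this
      cases b <;> simp at this

lemma er0_card {d N : ℕ} (Λ : Finset (Fin d → ℤ)) (h : IsER0 d N (↑Λ : Set (Fin d → ℤ))) :
    Λ.card ≤ (2 * N + 1) ^ d := by
  classical
  have hsub : Λ ⊆ Fintype.piFinset fun _ : Fin d => Finset.Icc (-(N:ℤ)) (N:ℤ) := by
    intro n hn
    rw [Fintype.mem_piFinset]
    intro i
    have := er0_subset_box h (Finset.mem_coe.2 hn) i
    rw [Finset.mem_Icc]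
    exact abs_le.1 this
  calc Λ.card ≤ (Fintype.piFinset fun _ : Fin d => Finset.Icc (-(N:ℤ)) (N:ℤ)).card :=
        Finset.card_le_card hsub
    _ = (2 * N + 1) ^ d := by
        rw [Fintype.card_piFinset]
        have : (Finset.Icc (-(N:ℤ)) (N:ℤ)).card = 2 * N + 1 := by
          rw [Int.card_Icc]
          omega
        simp [this]

section Mat
variable {ι : Type} [Fintype ι] [DecidableEq ι]

noncomputable def norm2 (y : ι → ℝ) : ℝ := Real.sqrt (∑ n, y n ^ 2)

lemma norm2_eq (y : ι → ℝ) : ‖(WithLp.equiv 2 (ι → ℝ)).symm y‖ = norm2 y := by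
  rw [EuclideanSpace.norm_eq]
  unfold norm2
  congr 1
  refine Finset.sum_congr rfl fun n _ => ?_
  rw [Real.norm_eq_abs, sq_abs]; rfl

lemma norm2_nonneg (y : ι → ℝ) : 0 ≤ norm2 y := Real.sqrt_nonneg _

lemma norm2_add_le (y w : ι → ℝ) : norm2 (y + w) ≤ norm2 y + norm2 w := by
  rw [← norm2_eq, ← norm2_eq, ← norm2_eq]
  exact norm_add_le _ _

lemma norm2_eq_zero {y : ι → ℝ} (h : norm2 y = 0) : y = 0 := by
  have := norm2_eq y
  rw [h, norm_eq_zero] at this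
  have := congrArg (WithLp.equiv 2 (ι → ℝ)) this
  simpa using this

lemma norm2_diag_lower {δ : ℝ} (hδ : 0 ≤ δ) {d : ι → ℝ} (hd : ∀ n, δ ≤ |d n|)
    (y : ι → ℝ) : δ * norm2 y ≤ norm2 (fun n => d n * y n) := by
  unfold norm2
  rw [← Real.sqrt_sq hδ, ← Real.sqrt_mul (by positivity), Finset.mul_sum]
  apply Real.sqrt_le_sqrt
  apply Finset.sum_le_sum
  intro n _
  rw [mul_pow]
  apply mul_le_mul_of_nonneg_right _ (sq_nonneg _)
  calc δ ^ 2 ≤ |d n| ^ 2 := by apply pow_le_pow_left₀ hδ (hd n)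
    _ = d n ^ 2 := sq_abs _

lemma norm2_mulVec_le {ε : ℝ} (hε : 0 ≤ ε) {K : Matrix ι ι ℝ}
    (hK : ∀ n m, |K n m| ≤ ε) (y : ι → ℝ) :
    norm2 (K.mulVec y) ≤ (Fintype.card ι : ℝ) * ε * norm2 y := by
  unfold norm2
  have hcard : (0:ℝ) ≤ (Fintype.card ι : ℝ) := Nat.cast_nonneg _
  rw [← Real.sqrt_sq (by positivity : (0:ℝ) ≤ (Fintype.card ι : ℝ) * ε),
    ← Real.sqrt_mul (by positivity)]
  apply Real.sqrt_le_sqrt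
  have habs : ∀ m, |y m| ^ 2 = y m ^ 2 := fun m => sq_abs _
  have hCS : (∑ m, |y m|) ^ 2 ≤ (Fintype.card ι : ℝ) * ∑ m, y m ^ 2 := by
    calc (∑ m, |y m|) ^ 2 ≤ (Finset.univ.card : ℝ) * ∑ m, |y m| ^ 2 :=
          sq_sum_le_card_mul_sum_sq
      _ = (Fintype.card ι : ℝ) * ∑ m, y m ^ 2 := by
          rw [Finset.card_univ]; congr 1; exact Finset.sum_congr rfl fun m _ => habs m
  have hpt : ∀ n, (K.mulVec y n) ^ 2 ≤ ε ^ 2 * (∑ m, |y m|) ^ 2 := by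
    intro n
    have h1 : |K.mulVec y n| ≤ ε * ∑ m, |y m| := by
      rw [Matrix.mulVec]
      calc |∑ m, K n m * y m| ≤ ∑ m, |K n m * y m| := Finset.abs_sum_le_sum_abs _ _
        _ ≤ ∑ m, ε * |y m| := by
            apply Finset.sum_le_sum
            intro m _
            rw [abs_mul]
            exact mul_le_mul_of_nonneg_right (hK n m) (abs_nonneg _)
        _ = ε * ∑ m, |y m| := by rw [Finset.mul_sum]
    calc (K.mulVec y n) ^ 2 = |K.mulVec y n| ^ 2 := (sq_abs _).symm
      _ ≤ (ε * ∑ m, |y m|) ^ 2 := by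
          apply pow_le_pow_left₀ (abs_nonneg _) h1
      _ = ε ^ 2 * (∑ m, |y m|) ^ 2 := by ring
  calc ∑ n, (K.mulVec y n) ^ 2 ≤ ∑ _n : ι, ε ^ 2 * (∑ m, |y m|) ^ 2 :=
        Finset.sum_le_sum fun n _ => hpt n
    _ = (Fintype.card ι : ℝ) * (ε ^ 2 * (∑ m, |y m|) ^ 2) := by
        rw [Finset.sum_const, Finset.card_univ, nsmul_eq_mul]
    _ ≤ (Fintype.card ι : ℝ) * (ε ^ 2 * ((Fintype.card ι : ℝ) * ∑ m, y m ^ 2)) := by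
        apply mul_le_mul_of_nonneg_left _ hcard
        exact mul_le_mul_of_nonneg_left hCS (by positivity)
    _ = ((Fintype.card ι : ℝ) * ε) ^ 2 * ∑ m, y m ^ 2 := by ring

end Mat

lemma matrix_green {ι : Type} [Fintype ι] [DecidableEq ι] [Nonempty ι]
    (d : ι → ℝ) (K : Matrix ι ι ℝ) (z : ι → ι → ℝ) (δ ρ ε : ℝ)
    (hδ : 0 < δ) (hρ : 0 < ρ) (hε : 0 ≤ ε)
    (hd : ∀ n, δ ≤ |d n|)
    (hK : ∀ n m, |K n m| ≤ ε * Real.exp (-(ρ * z n m)))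
    (hcard : (Fintype.card ι : ℝ) * ε ≤ δ / 2)
    (hz0 : ∀ n, z n n = 0) (hznn : ∀ n m, 0 ≤ z n m)
    (htri : ∀ n m n', z n n' ≤ z n m + z m n') :
    IsUnit (K + Matrix.diagonal d) ∧
    opNorm (K + Matrix.diagonal d)⁻¹ ≤ 2 * δ⁻¹ ∧
    ∀ n n', |(K + Matrix.diagonal d)⁻¹ n n'| ≤ 2 * δ⁻¹ * Real.exp (-(ρ * z n n')) := by
  set H : Matrix ι ι ℝ := K + Matrix.diagonal d with hH
  have hKe : ∀ n m, |K n m| ≤ ε := by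
    intro n m
    refine (hK n m).trans ?_
    calc ε * Real.exp (-(ρ * z n m)) ≤ ε * 1 :=
          mul_le_mul_of_nonneg_left (Real.exp_le_one_iff.2 (by
            simp only [neg_nonpos]; exact mul_nonneg hρ.le (hznn n m))) hε
      _ = ε := mul_one ε
  have hlow : ∀ y : ι → ℝ, (δ / 2) * norm2 y ≤ norm2 (H.mulVec y) := by
    intro y
    have hsplit : H.mulVec y = K.mulVec y + fun n => d n * y n := by
      rw [hH, Matrix.add_mulVec]
      congr 1
      ext n
      exact Matrix.mulVec_diagonal d y n
    have h1 : δ * norm2 y ≤ norm2 (fun n => d n * y n) := norm2_diag_lower hδ.le hd y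
    have h2 : norm2 (K.mulVec y) ≤ (Fintype.card ι : ℝ) * ε * norm2 y :=
      norm2_mulVec_le hε hKe y
    have h3 : norm2 (fun n => d n * y n) ≤ norm2 (H.mulVec y) + norm2 (K.mulVec y) := by
      have : (fun n => d n * y n) = H.mulVec y + (-(K.mulVec y)) := by
        rw [hsplit]; ext n; simp
      rw [this]
      refine (norm2_add_le _ _).trans ?_
      have : norm2 (-(K.mulVec y)) = norm2 (K.mulVec y) := by
        unfold norm2; congr 1; refine Finset.sum_congr rfl fun n _ => ?_; simp
      rw [this]
    have h4 : (Fintype.card ι : ℝ) * ε * norm2 y ≤ (δ / 2) * norm2 y :=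
      mul_le_mul_of_nonneg_right hcard (norm2_nonneg y)
    nlinarith [norm2_nonneg y, norm2_nonneg (H.mulVec y)]
  have hker : ∀ y : ι → ℝ, H.mulVec y = 0 → y = 0 := by
    intro y hy
    apply norm2_eq_zero
    have := hlow y
    rw [hy] at this
    have h0 : norm2 (0 : ι → ℝ) = 0 := by unfold norm2; simp
    rw [h0] at this
    have := norm2_nonneg y
    nlinarith
  have hbij : Function.Bijective (Matrix.toLin' H) := by
    rw [Function.Bijective, and_iff_left_of_imp (LinearMap.injective_iff_surjective).1]
    intro y y' hyy
    have : H.mulVec (y - y') = 0 := by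
      rw [Matrix.mulVec_sub]
      simp only [Matrix.toLin'_apply] at hyy
      rw [hyy, sub_self]
    have := hker _ this
    exact sub_eq_zero.1 this
  have hunit : IsUnit H := by
    have h1 : IsUnit (Matrix.toLinAlgEquiv' H) := Module.End.isUnit_iff _ |>.2 hbij
    have h2 := h1.map (Matrix.toLinAlgEquiv' (n := ι) (R := ℝ)).symm
    rwa [AlgEquiv.symm_apply_apply] at h2
  have hdet : IsUnit H.det := Matrix.isUnit_iff_isUnit_det H |>.1 hunit
  have hHG : H * H⁻¹ = 1 := Matrix.mul_nonsing_inv H hdet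
  refine ⟨hunit, ?_, ?_⟩
  · apply ContinuousLinearMap.opNorm_le_bound _ (by positivity)
    intro zv
    set y : ι → ℝ := WithLp.equiv 2 (ι → ℝ) zv with hy
    have hz : zv = (WithLp.equiv 2 (ι → ℝ)).symm y := by rw [hy]; simp
    have happ : (LinearMap.toContinuousLinearMap (Matrix.toEuclideanLin H⁻¹)) zv
        = (WithLp.equiv 2 (ι → ℝ)).symm (H⁻¹.mulVec y) := by
      rw [LinearMap.coe_toContinuousLinearMap', Matrix.toEuclideanLin_apply]; rfl
    rw [happ, norm2_eq, hz, norm2_eq]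
    set w := H⁻¹.mulVec y with hw
    have hHw : H.mulVec w = y := by
      rw [hw, Matrix.mulVec_mulVec, hHG, Matrix.one_mulVec]
    have := hlow w
    rw [hHw] at this
    calc norm2 w ≤ (2 * δ⁻¹) * ((δ/2) * norm2 w) := by
          rw [← mul_assoc]
          have : (2 * δ⁻¹) * (δ/2) = 1 := by field_simp
          rw [this, one_mul]
      _ ≤ (2 * δ⁻¹) * norm2 y := by
          apply mul_le_mul_of_nonneg_left this (by positivity)
  · set G := H⁻¹ with hG
    have hDG : ∀ n n', d n * G n n' = (1 : Matrix ι ι ℝ) n n' - (K * G) n n' := by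
      intro n n'
      have h1 : (K * G + Matrix.diagonal d * G) n n' = (1 : Matrix ι ι ℝ) n n' := by
        rw [← Matrix.add_mul, ← hH, hHG]
      rw [Matrix.add_apply, Matrix.diagonal_mul] at h1
      linarith
    have hne : (Finset.univ : Finset (ι × ι)).Nonempty := Finset.univ_nonempty
    set f : ι × ι → ℝ := fun p => |G p.1 p.2| * Real.exp (ρ * z p.1 p.2) with hf
    set M := Finset.univ.sup' hne f with hM
    have hMnn : 0 ≤ M := by
      obtain ⟨p, hp⟩ := hne
      have h0 : (0:ℝ) ≤ f p := mul_nonneg (abs_nonneg _) (Real.exp_nonneg _)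
      exact h0.trans (Finset.le_sup' f hp)
    have hGle : ∀ m n', |G m n'| ≤ M * Real.exp (-(ρ * z m n')) := by
      intro m n'
      have h1 : f (m, n') ≤ M := Finset.le_sup' f (Finset.mem_univ _)
      have h2 : |G m n'| = f (m, n') * Real.exp (-(ρ * z m n')) := by
        rw [hf]; simp only
        rw [mul_assoc, ← Real.exp_add]
        simp
      rw [h2]
      exact mul_le_mul_of_nonneg_right h1 (Real.exp_nonneg _)
    have hhalf : δ⁻¹ * ((Fintype.card ι : ℝ) * ε) ≤ 1 / 2 := by
      have := mul_le_mul_of_nonneg_left hcard (by positivity : (0:ℝ) ≤ δ⁻¹)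
      calc δ⁻¹ * ((Fintype.card ι : ℝ) * ε) ≤ δ⁻¹ * (δ / 2) := this
        _ = 1 / 2 := by field_simp
    have hkey : ∀ p : ι × ι, f p ≤ δ⁻¹ + (1/2) * M := by
      rintro ⟨n, n'⟩
      have hdn : |d n| ≠ 0 := ne_of_gt (lt_of_lt_of_le hδ (hd n))
      have e1 : |G n n'| ≤ δ⁻¹ * (|(1 : Matrix ι ι ℝ) n n'| + |(K * G) n n'|) := by
        have h2 : |d n| * |G n n'| ≤ |(1 : Matrix ι ι ℝ) n n'| + |(K * G) n n'| := by
          rw [← abs_mul, hDG]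
          exact (abs_sub _ _).trans (le_refl _)
        have hpos : 0 < |d n| := lt_of_lt_of_le hδ (hd n)
        have h3 : |G n n'| ≤ |d n|⁻¹ * (|(1 : Matrix ι ι ℝ) n n'| + |(K * G) n n'|) := by
          calc |G n n'| = |d n|⁻¹ * (|d n| * |G n n'|) := by field_simp
            _ ≤ |d n|⁻¹ * (|(1 : Matrix ι ι ℝ) n n'| + |(K * G) n n'|) :=
                mul_le_mul_of_nonneg_left h2 (by positivity)
        refine h3.trans ?_
        apply mul_le_mul_of_nonneg_right _ (by positivity)
        exact inv_anti₀ hδ (hd n)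
      have e2 : |(K * G) n n'| * Real.exp (ρ * z n n') ≤ (Fintype.card ι : ℝ) * ε * M := by
        rw [Matrix.mul_apply]
        calc |∑ m, K n m * G m n'| * Real.exp (ρ * z n n')
            ≤ (∑ m, |K n m * G m n'|) * Real.exp (ρ * z n n') := by
              apply mul_le_mul_of_nonneg_right (Finset.abs_sum_le_sum_abs _ _)
                (Real.exp_nonneg _)
          _ = ∑ m, |K n m * G m n'| * Real.exp (ρ * z n n') := by rw [Finset.sum_mul]
          _ ≤ ∑ _m : ι, ε * M := by
              apply Finset.sum_le_sum
              intro m _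
              rw [abs_mul]
              calc |K n m| * |G m n'| * Real.exp (ρ * z n n')
                  ≤ (ε * Real.exp (-(ρ * z n m))) * (M * Real.exp (-(ρ * z m n'))) *
                      Real.exp (ρ * z n n') := by
                    apply mul_le_mul_of_nonneg_right _ (Real.exp_nonneg _)
                    exact mul_le_mul (hK n m) (hGle m n') (abs_nonneg _) (by positivity)
                _ = ε * M * (Real.exp (-(ρ * z n m)) * Real.exp (-(ρ * z m n')) *
                      Real.exp (ρ * z n n')) := by ring
                _ = ε * M * Real.exp (ρ * z n n' - ρ * z n m - ρ * z m n') := by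
                    rw [← Real.exp_add, ← Real.exp_add]
                    congr 1
                    ring
                _ ≤ ε * M * 1 := by
                    apply mul_le_mul_of_nonneg_left _ (by positivity)
                    rw [Real.exp_le_one_iff]
                    have := htri n m n'
                    nlinarith [hρ.le]
                _ = ε * M := mul_one _
          _ = (Fintype.card ι : ℝ) * ε * M := by
              rw [Finset.sum_const, Finset.card_univ, nsmul_eq_mul]; ring
      have e3 : |(1 : Matrix ι ι ℝ) n n'| * Real.exp (ρ * z n n') ≤ 1 := by
        by_cases hnn : n = n'
        · subst hnn
          rw [Matrix.one_apply_eq, hz0, mul_zero, Real.exp_zero]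
          norm_num
        · rw [Matrix.one_apply_ne hnn]
          simp
      calc f (n, n') = |G n n'| * Real.exp (ρ * z n n') := rfl
        _ ≤ δ⁻¹ * (|(1 : Matrix ι ι ℝ) n n'| + |(K * G) n n'|) * Real.exp (ρ * z n n') :=
            mul_le_mul_of_nonneg_right e1 (Real.exp_nonneg _)
        _ = δ⁻¹ * (|(1 : Matrix ι ι ℝ) n n'| * Real.exp (ρ * z n n')
              + |(K * G) n n'| * Real.exp (ρ * z n n')) := by ring
        _ ≤ δ⁻¹ * (1 + (Fintype.card ι : ℝ) * ε * M) := by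
            apply mul_le_mul_of_nonneg_left _ (by positivity)
            linarith
        _ = δ⁻¹ + δ⁻¹ * ((Fintype.card ι : ℝ) * ε) * M := by ring
        _ ≤ δ⁻¹ + (1/2) * M := by
            have := mul_le_mul_of_nonneg_right hhalf hMnn
            linarith
    have hMle : M ≤ δ⁻¹ + (1/2) * M := Finset.sup'_le hne f (fun p _ => hkey p)
    have hM2 : M ≤ 2 * δ⁻¹ := by linarith
    intro n n'
    calc |G n n'| ≤ M * Real.exp (-(ρ * z n n')) := hGle n n'
      _ ≤ (2 * δ⁻¹) * Real.exp (-(ρ * z n n')) :=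
          mul_le_mul_of_nonneg_right hM2 (Real.exp_nonneg _)

end Aux

/-- Theorem 4.3 / thmini: the initial scale estimate.  Away from
the trajectory hitting set `X_N`, whose sections are small, the Green's functions
of elementary regions of size `N` exist and decay, provided `λ ≥ 2δ⁻¹(2N+1)^d`. -/
theorem initial_scale_estimate (d : ℕ) (hd : 0 < d) (ρ : ℝ) (hρ : 0 < ρ) :
    ∃ N₀ : ℕ, ∀ (b : ℕ), 0 < b →
    ∀ β : Fin b → Fin d, Function.Surjective β →
    ∀ S : (Fin d → ℤ) → (Fin d → ℤ) → ℝ,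
      (∀ n n' m : Fin d → ℤ, S (n + m) (n' + m) = S n n') →
      (∀ n n' : Fin d → ℤ, S n n' = S n' n) →
      (∀ n n' : Fin d → ℤ, |S n n'| ≤ Real.exp (-ρ * (zNorm (n - n') : ℝ))) →
    ∀ v : (Fin b → ℝ) → ℝ, AnalyticOnNhd ℝ v Set.univ →
      (∀ (x : Fin b → ℝ) (m : Fin b → ℤ), v (fun t => x t + (m t : ℝ)) = v x) →
      (∀ (j : Fin d) (x : Fin b → ℝ), ∃ y y' : Fin b → ℝ,
        (∀ t, β t ≠ j → y t = x t) ∧ (∀ t, β t ≠ j → y' t = x t) ∧ v y ≠ v y') →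
    ∀ C a : ℝ, 0 < C → 0 < a →
      (∀ (E' δ' : ℝ), 0 < δ' → ∀ (j : Fin d) (x : Fin b → ℝ),
        sectMeasure β {y : Fin b → ℝ | |v y - E'| < δ'} j x ≤
          ENNReal.ofReal (C * δ' ^ a)) →
    ∀ (ω : Fin b → ℝ) (E δ : ℝ), 0 < δ → ∀ N : ℕ,
      (∀ (j : Fin d) (x : Fin b → ℝ),
        sectMeasure β {y : Fin b → ℝ | ∃ n : Fin d → ℤ, zNorm n ≤ N ∧
            |v (torusProj (shift β ω n y)) - E| < δ} j x ≤
          ENNReal.ofReal (C * (2 * (N : ℝ) + 1) ^ d * δ ^ a)) ∧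
      (∀ lam : ℝ, 2 * δ⁻¹ * (2 * (N : ℝ) + 1) ^ d ≤ lam → N₀ ≤ N →
        ∀ x : Fin b → ℝ,
          ¬ (∃ n : Fin d → ℤ, zNorm n ≤ N ∧
              |v (torusProj (shift β ω n x)) - E| < δ) →
          ∀ Λ : Finset (Fin d → ℤ), IsER0 d N (↑Λ : Set (Fin d → ℤ)) →
            IsUnit (hamR β S lam v ω x E Λ) ∧
            opNorm (green β S lam v ω x E Λ) ≤ 2 * δ⁻¹ ∧
            ∀ n n' : Λ, |green β S lam v ω x E Λ n n'| ≤
              2 * δ⁻¹ * Real.exp (-ρ * (zNorm (n.1 - n'.1) : ℝ))) := by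
  classical
  refine ⟨0, ?_⟩
  intro b hb β hβ S hStoe hSsym hS v hv hper hnd C a hC ha hLoj ω E δ hδ N
  constructor
  · -- part (1) : measure estimate
    intro j x
    set Xδ : Set (Fin b → ℝ) := {y | |v y - E| < δ} with hXδ
    have hvc : Continuous v := continuousOn_univ.1 hv.continuousOn
    have hXδopen : IsOpen Xδ := by
      have : Xδ = (fun y => |v y - E|) ⁻¹' (Iio δ) := rfl
      rw [this]
      exact isOpen_Iio.preimage ((hvc.sub continuous_const).abs)
    set B : Finset (Fin d → ℤ) := Fintype.piFinset fun _ : Fin d => Finset.Icc (-(N:ℤ)) (N:ℤ)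
      with hB
    set x' : (Fin d → ℤ) → (Fin b → ℝ) := fun n t => Int.fract (x t + (n (β t) : ℝ) * ω t)
      with hx'
    set T : (Fin d → ℤ) → (blockIdx β j → ℝ) → (blockIdx β j → ℝ) :=
      fun n θ s => Int.fract (θ s + (n j : ℝ) * ω s.1) with hT
    set A : (Fin d → ℤ) → Set (blockIdx β j → ℝ) :=
      fun n => {η | (fun t => if h : β t = j then η ⟨t, h⟩ else x' n t) ∈ Xδ} with hA
    have hplug : ∀ (n : Fin d → ℤ) (θ : blockIdx β j → ℝ),
        torusProj (shift β ω n (fun t => if h : β t = j then θ ⟨t, h⟩ else x t)) =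
        fun t => if h : β t = j then T n θ ⟨t, h⟩ else x' n t := by
      intro n θ
      funext t
      by_cases h : β t = j
      · simp only [torusProj, shift, dif_pos h, hT, hx']
        subst h
        rfl
      · simp only [torusProj, shift, dif_neg h, hx']
    have hmemB : ∀ n : Fin d → ℤ, n ∈ B ↔ zNorm n ≤ N := by
      intro n
      rw [hB, Fintype.mem_piFinset, zNorm_le_iff]
      constructor
      · intro h i; have := h i; rw [Finset.mem_Icc] at this; exact abs_le.2 this
      · intro h i; rw [Finset.mem_Icc]; exact abs_le.1 (h i)
    have hmain : sectMeasure β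
        {y | ∃ n : Fin d → ℤ, zNorm n ≤ N ∧ |v (torusProj (shift β ω n y)) - E| < δ} j x
        = volume (⋃ n ∈ B, {θ : blockIdx β j → ℝ |
            (∀ s, θ s ∈ Icc (0:ℝ) 1) ∧ T n θ ∈ A n}) := by
      rw [sectMeasure]
      congr 1
      ext θ
      simp only [Set.mem_setOf_eq, Set.mem_iUnion]
      constructor
      · rintro ⟨hbox, n, hn, hlt⟩
        refine ⟨n, (hmemB n).2 hn, hbox, ?_⟩
        show (fun t => if h : β t = j then T n θ ⟨t, h⟩ else x' n t) ∈ Xδ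
        rw [← hplug n θ]
        exact hlt
      · rintro ⟨n, hn, hbox, hmem⟩
        refine ⟨hbox, n, (hmemB n).1 hn, ?_⟩
        have : (fun t => if h : β t = j then T n θ ⟨t, h⟩ else x' n t) ∈ Xδ := hmem
        rw [← hplug n θ] at this
        exact this
    rw [hmain]
    refine le_trans (measure_biUnion_finset_le B _) ?_
    have hbound : ∀ n ∈ B, volume {θ : blockIdx β j → ℝ |
        (∀ s, θ s ∈ Icc (0:ℝ) 1) ∧ T n θ ∈ A n} ≤ ENNReal.ofReal (C * δ ^ a) := by
      intro n _
      have hAmeas : MeasurableSet (A n) := by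
        have hcont : Continuous fun η : blockIdx β j → ℝ =>
            (fun t => if h : β t = j then η ⟨t, h⟩ else x' n t) := by
          apply continuous_pi
          intro t
          by_cases h : β t = j
          · simp only [dif_pos h]; exact continuous_apply _
          · simp only [dif_neg h]; exact continuous_const
        exact (hXδopen.preimage hcont).measurableSet
      refine le_trans (vol_fract_le (fun s : blockIdx β j => (n j : ℝ) * ω s.1) (A n)
        hAmeas) ?_
      exact hLoj E δ hδ j (x' n)
    refine le_trans (Finset.sum_le_sum hbound) ?_
    rw [Finset.sum_const, nsmul_eq_mul]
    have hcardB : B.card = (2 * N + 1) ^ d := by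
      rw [hB, Fintype.card_piFinset]
      have : (Finset.Icc (-(N:ℤ)) (N:ℤ)).card = 2 * N + 1 := by
        rw [Int.card_Icc]; omega
      simp [this]
    rw [hcardB]
    have hcast : (((2 * N + 1) ^ d : ℕ) : ℝ≥0∞) = ENNReal.ofReal ((2 * (N:ℝ) + 1) ^ d) := by
      rw [← ENNReal.ofReal_natCast]
      congr 1
      push_cast
      ring
    rw [hcast, ← ENNReal.ofReal_mul (by positivity)]
    apply le_of_eq
    congr 1
    ring
  · -- part (2) : Green's function bounds
    intro lam hlam _ x hx Λ hER
    push_neg at hx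
    have h0mem : (0 : Fin d → ℤ) ∈ Λ := Finset.mem_coe.1 (er0_zero_mem hER)
    haveI : Nonempty ↥Λ := ⟨⟨0, h0mem⟩⟩
    have hP : (0:ℝ) < (2 * (N:ℝ) + 1) ^ d := by positivity
    have hlam0 : (0:ℝ) < lam := lt_of_lt_of_le (by positivity) hlam
    set dfun : ↥Λ → ℝ := fun n => v (shift β ω n.1 x) - E with hdfun
    set Kmat : Matrix ↥Λ ↥Λ ℝ := Matrix.of fun n n' : ↥Λ => lam⁻¹ * S n.1 n'.1 with hKmat
    have hdecomp : hamR β S lam v ω x E Λ = Kmat + Matrix.diagonal dfun := by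
      ext n n'
      simp only [hamR, Matrix.of_apply, Matrix.add_apply, Matrix.diagonal_apply, hKmat, hdfun]
    have hvtp : ∀ y : Fin b → ℝ, v (torusProj y) = v y := by
      intro y
      calc v (torusProj y) = v (fun t => torusProj y t + ((⌊y t⌋ : ℤ) : ℝ)) :=
            (hper (torusProj y) (fun t => ⌊y t⌋)).symm
        _ = v y := by
            congr 1
            funext t
            exact Int.fract_add_floor (y t)
    have hdiag : ∀ n : ↥Λ, δ ≤ |dfun n| := by
      intro n
      have hzn : zNorm n.1 ≤ N :=
        zNorm_le_iff.2 (er0_subset_box hER (Finset.mem_coe.2 n.2))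
      have := hx n.1 hzn
      rwa [hvtp (shift β ω n.1 x)] at this
    have hKb : ∀ n m : ↥Λ, |Kmat n m| ≤ lam⁻¹ * Real.exp (-(ρ * (zNorm (n.1 - m.1) : ℝ))) := by
      intro n m
      have hKnm : Kmat n m = lam⁻¹ * S n.1 m.1 := rfl
      rw [hKnm, abs_mul, abs_of_nonneg (inv_nonneg.2 hlam0.le)]
      apply mul_le_mul_of_nonneg_left _ (inv_nonneg.2 hlam0.le)
      have := hS n.1 m.1
      rwa [neg_mul] at this
    have hcΛ : ((Fintype.card ↥Λ : ℕ) : ℝ) ≤ (2 * (N:ℝ) + 1) ^ d := by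
      rw [Fintype.card_coe]
      have := er0_card Λ hER
      calc (Λ.card : ℝ) ≤ (((2 * N + 1) ^ d : ℕ) : ℝ) := by exact_mod_cast this
        _ = (2 * (N:ℝ) + 1) ^ d := by push_cast; ring
    have hinv : lam⁻¹ * (2 * (2 * (N:ℝ) + 1) ^ d) ≤ δ := by
      have h2 : lam⁻¹ ≤ (2 * δ⁻¹ * (2 * (N:ℝ) + 1) ^ d)⁻¹ :=
        inv_anti₀ (by positivity) hlam
      calc lam⁻¹ * (2 * (2 * (N:ℝ) + 1) ^ d)
          ≤ (2 * δ⁻¹ * (2 * (N:ℝ) + 1) ^ d)⁻¹ * (2 * (2 * (N:ℝ) + 1) ^ d) :=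
            mul_le_mul_of_nonneg_right h2 (by positivity)
        _ = δ := by field_simp
    have hcard : ((Fintype.card ↥Λ : ℕ) : ℝ) * lam⁻¹ ≤ δ / 2 := by
      have hl : (0:ℝ) ≤ lam⁻¹ := inv_nonneg.2 hlam0.le
      calc ((Fintype.card ↥Λ : ℕ) : ℝ) * lam⁻¹ ≤ (2 * (N:ℝ) + 1) ^ d * lam⁻¹ :=
            mul_le_mul_of_nonneg_right hcΛ hl
        _ ≤ δ / 2 := by nlinarith
    set z : ↥Λ → ↥Λ → ℝ := fun n m => (zNorm (n.1 - m.1) : ℝ) with hz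
    have hz0 : ∀ n : ↥Λ, z n n = 0 := by
      intro n
      have h00 : n.1 - n.1 = (0 : Fin d → ℤ) := sub_self _
      simp [hz, h00, zNorm_zero]
    have hznn : ∀ n m : ↥Λ, 0 ≤ z n m := fun n m => Nat.cast_nonneg _
    have htri : ∀ n m n' : ↥Λ, z n n' ≤ z n m + z m n' := by
      intro n m n'
      have he : n.1 - n'.1 = (n.1 - m.1) + (m.1 - n'.1) := by
        funext i
        simp only [Pi.sub_apply, Pi.add_apply]
        ring
      have := zNorm_tri (n.1 - m.1) (m.1 - n'.1)
      rw [← he] at this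
      simp only [hz]
      exact_mod_cast this
    obtain ⟨hu, hop, hent⟩ := matrix_green dfun Kmat z δ ρ lam⁻¹ hδ hρ
      (inv_nonneg.2 hlam0.le) hdiag hKb hcard hz0 hznn htri
    refine ⟨by rw [hdecomp]; exact hu, ?_, ?_⟩
    · show opNorm (green β S lam v ω x E Λ) ≤ 2 * δ⁻¹
      have hge : green β S lam v ω x E Λ = (Kmat + Matrix.diagonal dfun)⁻¹ := by
        rw [green, hdecomp]
      rw [hge]
      exact hop
    · intro n n'
      have hge : green β S lam v ω x E Λ = (Kmat + Matrix.diagonal dfun)⁻¹ := by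
        rw [green, hdecomp]
      rw [hge, neg_mul]
      exact hent n n'

end QPLoc
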